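/- In the group algebra ℤS_n, the Jucys-Murphy elements L_k = (1,k) + (2,k) + ... + (k-1,k), for k = 1, ..., n (with L₁ = 0), pairwise commute: L_j L_k = L_k L_j for all j, k. -/

import Mathlib

open MonoidAlgebra

/-- The Jucys-Murphy element `L_k = Σ_{i < k} (i,k)` in `ℤ S_n`. -/
noncomputable def jucysMurphy (n : ℕ) (k : Fin n) :
    MonoidAlgebra ℤ (Equiv.Perm (Fin n)) :=
  ∑ i ∈ Finset.univ.filter (· < k), MonoidAlgebra.of ℤ (Equiv.Perm (Fin n)) (Equiv.swap i k)

lemma jm_comm_aux (n : ℕ) (k : Fin n) (σ : Equiv.Perm (Fin n)) (hσk : σ k = k)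
    (hσ : ∀ a, a < k → σ a < k) :
    MonoidAlgebra.of ℤ (Equiv.Perm (Fin n)) σ * jucysMurphy n k =
      jucysMurphy n k * MonoidAlgebra.of ℤ (Equiv.Perm (Fin n)) σ := by
  unfold jucysMurphy
  rw [Finset.mul_sum, Finset.sum_mul]
  have hmaps : ∀ a ∈ Finset.univ.filter (· < k),
      σ a ∈ Finset.univ.filter (· < k) := by
    intro a ha
    simp only [Finset.mem_filter, Finset.mem_univ, true_and] at ha ⊢
    exact hσ a ha
  have himg : (Finset.univ.filter (· < k)).image σ = Finset.univ.filter (· < k) := by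
    apply Finset.eq_of_subset_of_card_le
    · intro b hb
      rcases Finset.mem_image.mp hb with ⟨a, ha, rfl⟩
      exact hmaps a ha
    · rw [Finset.card_image_of_injective _ σ.injective]
  refine Finset.sum_bij (fun a _ => σ a) hmaps
    (fun a _ b _ h => σ.injective h) ?_ ?_
  · intro b hb
    rw [← himg] at hb
    rcases Finset.mem_image.mp hb with ⟨a, ha, rfl⟩
    exact ⟨a, ha, rfl⟩
  · intro a _
    rw [← map_mul, ← map_mul, Equiv.mul_swap_eq_swap_mul, hσk]

lemma jm_comm_lt (n : ℕ) (j k : Fin n) (hjk : j < k) :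
    jucysMurphy n j * jucysMurphy n k = jucysMurphy n k * jucysMurphy n j := by
  have hdef : jucysMurphy n j = ∑ i ∈ Finset.univ.filter (· < j),
      MonoidAlgebra.of ℤ (Equiv.Perm (Fin n)) (Equiv.swap i j) := rfl
  conv_lhs => rw [hdef, Finset.sum_mul]
  conv_rhs => rw [hdef, Finset.mul_sum]
  refine Finset.sum_congr rfl fun i hi => ?_
  simp only [Finset.mem_filter, Finset.mem_univ, true_and] at hi
  apply jm_comm_aux
  · apply Equiv.swap_apply_of_ne_of_ne
    · exact (lt_trans hi hjk).ne'
    · exact hjk.ne'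
  · intro a ha
    rcases eq_or_ne a i with rfl | hai
    · rw [Equiv.swap_apply_left]; exact hjk
    rcases eq_or_ne a j with rfl | haj
    · rw [Equiv.swap_apply_right]; exact lt_trans hi hjk
    · rw [Equiv.swap_apply_of_ne_of_ne hai haj]; exact ha

theorem stmt_6 (n : ℕ) (j k : Fin n) :
    jucysMurphy n j * jucysMurphy n k = jucysMurphy n k * jucysMurphy n j := by
  rcases lt_trichotomy j k with h | rfl | h
  · exact jm_comm_lt n j k h
  · rfl
  · exact (jm_comm_lt n k j h).symm
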